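/- Let m > 0 and t > 0 be real numbers. Then the sum over all integers j of (sqrt(t) * 2^j)^m * exp(-(1/2) * sqrt(t) * 2^j) is bounded by C_m := 1/(1 - 2^(-m)) + (8m)^m / (1 - exp(-1/8)), a constant independent of t. -/

import Mathlib

open Real

lemma aux_rpow_exp (m x : ℝ) (hm : 0 < m) (hx : 0 < x) :
    x ^ m * Real.exp (-(x / 8)) ≤ (8 * m) ^ m := by
  have h8m : 0 < 8 * m := by linarith
  rw [Real.rpow_def_of_pos hx, Real.rpow_def_of_pos h8m, ← Real.exp_add, Real.exp_le_exp]
  have hlog : Real.log (x / (8 * m)) ≤ x / (8 * m) - 1 :=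
    Real.log_le_sub_one_of_pos (by positivity)
  have hld : Real.log (x / (8 * m)) = Real.log x - Real.log (8 * m) :=
    Real.log_div hx.ne' h8m.ne'
  have hkey : m * (x / (8 * m) - 1) = x / 8 - m := by field_simp
  have h2 := mul_le_mul_of_nonneg_left hlog hm.le
  rw [hld, mul_sub, hkey] at h2
  linarith

theorem stmt_2 (m t : ℝ) (hm : 0 < m) (ht : 0 < t) :
    Summable (fun j : ℤ =>
      (Real.sqrt t * (2 : ℝ) ^ (j : ℝ)) ^ m *
        Real.exp (-(1 / 2) * Real.sqrt t * (2 : ℝ) ^ (j : ℝ))) ∧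
    (∑' j : ℤ, (Real.sqrt t * (2 : ℝ) ^ (j : ℝ)) ^ m *
        Real.exp (-(1 / 2) * Real.sqrt t * (2 : ℝ) ^ (j : ℝ))) ≤
      1 / (1 - 2 ^ (-m)) + (8 * m) ^ m / (1 - Real.exp (-1 / 8)) := by
  have ha : 0 < Real.sqrt t := Real.sqrt_pos.mpr ht
  set a := Real.sqrt t with ha_def
  set f : ℤ → ℝ := fun j => (a * (2:ℝ)^(j:ℝ))^m * Real.exp (-(1/2) * a * (2:ℝ)^(j:ℝ)) with hf
  set j0 : ℤ := -⌊Real.logb 2 a⌋ with hj0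
  set c : ℝ := a * (2:ℝ)^(j0:ℝ) with hcdef
  have hc_eq : c = (2:ℝ) ^ (Real.logb 2 a + (j0:ℝ)) := by
    rw [Real.rpow_add (by norm_num : (0:ℝ) < 2), Real.rpow_logb (by norm_num) (by norm_num) ha]
  have h1c : (1:ℝ) ≤ c := by
    rw [hc_eq]
    apply Real.one_le_rpow (by norm_num)
    have := Int.floor_le (Real.logb 2 a)
    push_cast [hj0]
    linarith
  have hc2 : c ≤ 2 := by
    have : c ≤ (2:ℝ)^(1:ℝ) := by
      rw [hc_eq]
      apply Real.rpow_le_rpow_of_exponent_le (by norm_num)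
      have := Int.lt_floor_add_one (Real.logb 2 a)
      push_cast [hj0]
      linarith
    simpa using this
  have hc0 : 0 < c := lt_of_lt_of_le one_pos h1c
  -- the majorant
  set g : ℤ → ℝ := Int.rec (fun k : ℕ => (8*m)^m * Real.exp (-(((k:ℝ)+1)/8)))
      (fun k : ℕ => ((2:ℝ)^(-m))^k) with hg
  -- shifted form of f
  have hshift : ∀ n : ℤ, f (n + j0) = (c * (2:ℝ)^(n:ℝ))^m * Real.exp (-(c * (2:ℝ)^(n:ℝ) / 2)) := by
    intro n
    have hx : a * (2:ℝ)^(((n + j0 : ℤ)):ℝ) = c * (2:ℝ)^(n:ℝ) := by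
      push_cast
      rw [Real.rpow_add (by norm_num : (0:ℝ) < 2)]
      ring
    simp only [hf]
    rw [show (-(1/2) * a * (2:ℝ)^(((n + j0 : ℤ)):ℝ)) = -((a * (2:ℝ)^(((n + j0 : ℤ)):ℝ))/2) from by
      ring_nf, hx]
  have hbound : ∀ n : ℤ, f (n + j0) ≤ g n := by
    intro n
    rw [hshift n]
    match n with
    | Int.ofNat k =>
      show (c * (2:ℝ)^((Int.ofNat k : ℤ):ℝ))^m * Real.exp (-(c * (2:ℝ)^((Int.ofNat k : ℤ):ℝ) / 2))
          ≤ (8*m)^m * Real.exp (-(((k:ℝ)+1)/8))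
      set x : ℝ := c * (2:ℝ)^((Int.ofNat k : ℤ):ℝ) with hxdef
      have hxpos : 0 < x := by positivity
      have hxk : (k:ℝ) + 1 ≤ x := by
        have h2k : (k:ℝ) + 1 ≤ (2:ℝ)^((Int.ofNat k : ℤ):ℝ) := by
          have : ((Int.ofNat k : ℤ):ℝ) = (k:ℕ) := by norm_cast
          rw [this, Real.rpow_natCast]
          exact_mod_cast Nat.lt_two_pow_self (n := k)
        calc (k:ℝ) + 1 ≤ (2:ℝ)^((Int.ofNat k : ℤ):ℝ) := h2k
          _ ≤ c * (2:ℝ)^((Int.ofNat k : ℤ):ℝ) := by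
              nlinarith [Real.rpow_pos_of_pos (by norm_num : (0:ℝ) < 2) ((Int.ofNat k : ℤ):ℝ)]
      have hsplit : Real.exp (-(x/2)) = Real.exp (-(x/8)) * Real.exp (-(3*x/8)) := by
        rw [← Real.exp_add]; ring_nf
      calc x^m * Real.exp (-(x/2)) = (x^m * Real.exp (-(x/8))) * Real.exp (-(3*x/8)) := by
            rw [hsplit]; ring
        _ ≤ (8*m)^m * Real.exp (-(((k:ℝ)+1)/8)) := by
            apply mul_le_mul (aux_rpow_exp m x hm hxpos)
            · apply Real.exp_le_exp.mpr; linarith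
            · positivity
            · positivity
    | Int.negSucc k =>
      show (c * (2:ℝ)^((Int.negSucc k : ℤ):ℝ))^m * Real.exp (-(c * (2:ℝ)^((Int.negSucc k : ℤ):ℝ) / 2))
          ≤ ((2:ℝ)^(-m))^k
      set x : ℝ := c * (2:ℝ)^((Int.negSucc k : ℤ):ℝ) with hxdef
      have hxpos : 0 < x := by positivity
      have hxle : x ≤ (2:ℝ)^(-(k:ℝ)) := by
        have : ((Int.negSucc k : ℤ):ℝ) = -(k:ℝ) - 1 := by
          simp [Int.negSucc_eq]; ring
        rw [hxdef, this]
        have h2 : (2:ℝ)^(-(k:ℝ) - 1) * 2 = (2:ℝ)^(-(k:ℝ)) := by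
          rw [← Real.rpow_add_one (by norm_num : (2:ℝ) ≠ 0)]; ring_nf
        nlinarith [Real.rpow_pos_of_pos (by norm_num : (0:ℝ) < 2) (-(k:ℝ) - 1)]
      have h1 : x^m ≤ ((2:ℝ)^(-(k:ℝ)))^m := Real.rpow_le_rpow hxpos.le hxle hm.le
      have h2 : ((2:ℝ)^(-(k:ℝ)))^m = ((2:ℝ)^(-m))^k := by
        rw [← Real.rpow_natCast ((2:ℝ)^(-m)) k, ← Real.rpow_mul (by norm_num),
          ← Real.rpow_mul (by norm_num)]
        ring_nf
      have h3 : Real.exp (-(x/2)) ≤ 1 := Real.exp_le_one_iff.mpr (by linarith)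
      calc x^m * Real.exp (-(x/2)) ≤ x^m * 1 := by
            apply mul_le_mul_of_nonneg_left h3 (Real.rpow_nonneg hxpos.le m)
        _ = x^m := mul_one _
        _ ≤ ((2:ℝ)^(-m))^k := by rw [← h2]; exact h1
  have hf0 : ∀ n : ℤ, 0 ≤ f (n + j0) := by
    intro n
    simp only [hf]
    positivity
  -- sums of the majorant
  have hr1 : (0:ℝ) ≤ Real.exp (-1/8) := (Real.exp_pos _).le
  have hr1' : Real.exp (-1/8) < 1 := Real.exp_lt_one_iff.mpr (by norm_num)
  have hr2 : (0:ℝ) ≤ (2:ℝ)^(-m) := Real.rpow_nonneg (by norm_num) _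
  have hr2' : (2:ℝ)^(-m) < 1 :=
    Real.rpow_lt_one_of_one_lt_of_neg (by norm_num) (by linarith)
  have hpos : HasSum (fun k : ℕ => (8*m)^m * Real.exp (-(((k:ℝ)+1)/8)))
      ((8*m)^m * Real.exp (-1/8) * (1 - Real.exp (-1/8))⁻¹) := by
    have hgeo := (hasSum_geometric_of_lt_one hr1 hr1').mul_left ((8*m)^m * Real.exp (-1/8))
    convert hgeo using 2 with k
    · rfl
    rw [← Real.exp_nat_mul, mul_assoc, ← Real.exp_add]
    congr 1
    ring
  have hneg : HasSum (fun k : ℕ => ((2:ℝ)^(-m))^k) ((1 - (2:ℝ)^(-m))⁻¹) :=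
    hasSum_geometric_of_lt_one hr2 hr2'
  have hgsum : HasSum g ((8*m)^m * Real.exp (-1/8) * (1 - Real.exp (-1/8))⁻¹
      + (1 - (2:ℝ)^(-m))⁻¹) := hpos.int_rec hneg
  -- summability of f
  have hFsum : Summable (fun n : ℤ => f (n + j0)) :=
    Summable.of_nonneg_of_le hf0 hbound hgsum.summable
  have hfsum : Summable f := by
    have := (Equiv.addRight j0).summable_iff (f := f)
    exact this.mp hFsum
  constructor
  · exact hfsum
  · have heq : (∑' j : ℤ, f j) = ∑' n : ℤ, f (n + j0) :=
      ((Equiv.addRight j0).tsum_eq f).symm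
    rw [show (fun j : ℤ => (Real.sqrt t * (2 : ℝ) ^ (j : ℝ)) ^ m *
        Real.exp (-(1 / 2) * Real.sqrt t * (2 : ℝ) ^ (j : ℝ))) = f from rfl] at *
    calc (∑' j : ℤ, f j) = ∑' n : ℤ, f (n + j0) := heq
      _ ≤ ∑' n : ℤ, g n := Summable.tsum_le_tsum hbound hFsum hgsum.summable
      _ = (8*m)^m * Real.exp (-1/8) * (1 - Real.exp (-1/8))⁻¹ + (1 - (2:ℝ)^(-m))⁻¹ :=
          hgsum.tsum_eq
      _ ≤ 1 / (1 - 2 ^ (-m)) + (8 * m) ^ m / (1 - Real.exp (-1/8)) := by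
          have h8 : (0:ℝ) ≤ (8*m)^m := Real.rpow_nonneg (by linarith) _
          have hinv : (0:ℝ) < (1 - Real.exp (-1/8))⁻¹ := by
            apply inv_pos.mpr; linarith
          have hkey : (8*m)^m * Real.exp (-1/8) * (1 - Real.exp (-1/8))⁻¹
              ≤ (8 * m) ^ m / (1 - Real.exp (-1/8)) := by
            rw [div_eq_mul_inv]
            have h1 : (8*m)^m * Real.exp (-1/8) ≤ (8*m)^m := by
              nlinarith
            exact mul_le_mul_of_nonneg_right h1 hinv.le
          rw [one_div]
          linarith
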